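/- Let r, c, m > 0 and 0 < a < 1 with c > 1/(r·(1−a)), and let p ∈ (p_SN, 1) be such that the system has exactly two interior equilibria (u*, v*) and (u_R, v_R) with u* < u_R. Then the determinant of the Jacobian at (u*, v*), namely m·p·u*·v*·[r·c·u*·(1+a−2u*) + (1+c·v*)·(1+2c·v*)], is strictly positive, while the determinant of the Jacobian at (u_R, v_R), namely m·p·u_R·v_R·[r·c·u_R·(1+a−2u_R) + (1+c·v_R)·(1+2c·v_R)], is strictly negative; in particular (u_R, v_R) is a saddle point (the Jacobian there has one positive and one negative real eigenvalue). -/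

import Mathlib

set_option maxHeartbeats 1000000


/-- Under strong cooperation, when there are exactly two interior equilibria
`(u*,v*)` and `(u_R,v_R)` with `u* < u_R`, the Jacobian determinant is positive at
the first and negative at the second; in particular `(u_R,v_R)` is a saddle, i.e.,
the Jacobian there has one negative and one positive real eigenvalue. -/
theorem stmt_13 (r c m p a u v uR vR : ℝ) (hr : 0 < r) (hc : 0 < c) (hm : 0 < m)
    (ha0 : 0 < a) (ha1 : a < 1) (hstrong : 1 / (r * (1 - a)) < c)
    (hp0 : 0 < p) (hp1 : p < 1)
    (hu : 0 < u) (hv : 0 < v)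
    (he1 : r * (1 - u) * (u - a) = (1 + c * v) * v)
    (he2 : p * u * (1 + c * v) = 1)
    (huR : 0 < uR) (hvR : 0 < vR)
    (heR1 : r * (1 - uR) * (uR - a) = (1 + c * vR) * vR)
    (heR2 : p * uR * (1 + c * vR) = 1)
    (hlt : u < uR)
    (honly : ∀ u' v' : ℝ, 0 < u' → 0 < v' →
      r * (1 - u') * (u' - a) = (1 + c * v') * v' → p * u' * (1 + c * v') = 1 →
      (u', v') = (u, v) ∨ (u', v') = (uR, vR)) :
    0 < m * p * u * v * (r * c * u * (1 + a - 2 * u) + (1 + c * v) * (1 + 2 * c * v)) ∧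
    m * p * uR * vR * (r * c * uR * (1 + a - 2 * uR) + (1 + c * vR) * (1 + 2 * c * vR)) < 0 ∧
    ∃ lam₁ lam₂ : ℝ, lam₁ < 0 ∧ 0 < lam₂ ∧
      lam₁ ^ 2 - (r * uR * (1 + a - 2 * uR) + m * p * c * uR * vR) * lam₁ +
        m * p * uR * vR * (r * c * uR * (1 + a - 2 * uR) + (1 + c * vR) * (1 + 2 * c * vR)) = 0 ∧
      lam₂ ^ 2 - (r * uR * (1 + a - 2 * uR) + m * p * c * uR * vR) * lam₂ +
        m * p * uR * vR * (r * c * uR * (1 + a - 2 * uR) + (1 + c * vR) * (1 + 2 * c * vR)) = 0 := by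
  have hune : u ≠ uR := ne_of_lt hlt
  have hcv : p*u*(c*v) = 1 - p*u := by linear_combination he2
  have hcvR : p*uR*(c*vR) = 1 - p*uR := by linear_combination heR2
  have hpu : p*u < 1 := by nlinarith [mul_pos (mul_pos hp0 hu) (mul_pos hc hv)]
  have hpuR : p*uR < 1 := by nlinarith [mul_pos (mul_pos hp0 huR) (mul_pos hc hvR)]
  have h1u : 0 < (1-u)*(u-a) := by
    nlinarith [mul_pos (show (0:ℝ) < 1 + c*v by positivity) hv, he1, hr]
  have h1uR : 0 < (1-uR)*(uR-a) := by
    nlinarith [mul_pos (show (0:ℝ) < 1 + c*vR by positivity) hvR, heR1, hr]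
  have hu1 : u < 1 := by
    by_contra h; push_neg at h
    nlinarith [h1u, mul_nonneg (by linarith : (0:ℝ) ≤ u - 1) (by linarith : (0:ℝ) ≤ u - a)]
  have hua : a < u := by
    by_contra h; push_neg at h
    nlinarith [h1u, mul_nonneg (by linarith : (0:ℝ) ≤ 1 - u) (by linarith : (0:ℝ) ≤ a - u)]
  have huR1 : uR < 1 := by
    by_contra h; push_neg at h
    nlinarith [h1uR, mul_nonneg (by linarith : (0:ℝ) ≤ uR - 1) (by linarith : (0:ℝ) ≤ uR - a)]
  have huRa : a < uR := by
    by_contra h; push_neg at h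
    nlinarith [h1uR, mul_nonneg (by linarith : (0:ℝ) ≤ 1 - uR) (by linarith : (0:ℝ) ≤ a - uR)]
  have Hu : c*p^2*r*u^2*(1-u)*(u-a) + p*u - 1 = 0 := by
    linear_combination (c*p^2*u^2)*he1 + (p*u*(c*v))*he2 + hcv
  have HuR : c*p^2*r*uR^2*(1-uR)*(uR-a) + p*uR - 1 = 0 := by
    linear_combination (c*p^2*uR^2)*heR1 + (p*uR*(c*vR))*heR2 + hcvR
  have master : ∀ x : ℝ,
      c*p^2*r*x^2*(1-x)*(x-a) + p*x - 1
        + c*p^2*r*(x-u)*(x-uR)*(x^2 + (u + uR - (1 + a))*x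
            + (a + (u + uR)*(u + uR - (1 + a)) - u*uR))
      = (p + c*p^2*r*(u*uR*(u + uR - (1 + a))
          - (u + uR)*(a + (u + uR)*(u + uR - (1 + a)) - u*uR)))*x
        + (c*p^2*r*(u*uR)*(a + (u + uR)*(u + uR - (1 + a)) - u*uR) - 1) := by
    intro x; ring
  have hABu : (p + c*p^2*r*(u*uR*(u + uR - (1 + a))
      - (u + uR)*(a + (u + uR)*(u + uR - (1 + a)) - u*uR)))*u
      + (c*p^2*r*(u*uR)*(a + (u + uR)*(u + uR - (1 + a)) - u*uR) - 1) = 0 := by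
    linear_combination Hu - master u
  have hABuR : (p + c*p^2*r*(u*uR*(u + uR - (1 + a))
      - (u + uR)*(a + (u + uR)*(u + uR - (1 + a)) - u*uR)))*uR
      + (c*p^2*r*(u*uR)*(a + (u + uR)*(u + uR - (1 + a)) - u*uR) - 1) = 0 := by
    linear_combination HuR - master uR
  have hal : p + c*p^2*r*(u*uR*(u + uR - (1 + a))
      - (u + uR)*(a + (u + uR)*(u + uR - (1 + a)) - u*uR)) = 0 := by
    have hmul : (p + c*p^2*r*(u*uR*(u + uR - (1 + a))
        - (u + uR)*(a + (u + uR)*(u + uR - (1 + a)) - u*uR))) * (u - uR) = 0 := by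
      linear_combination hABu - hABuR
    rcases mul_eq_zero.mp hmul with h | h
    · exact h
    · exact absurd (by linarith : u = uR) hune
  have hbe : c*p^2*r*(u*uR)*(a + (u + uR)*(u + uR - (1 + a)) - u*uR) - 1 = 0 := by
    linear_combination hABu - u*hal
  have hDq0 : 0 < a + (u + uR)*(u + uR - (1 + a)) - u*uR := by
    by_contra h; push_neg at h
    nlinarith [hbe, mul_nonneg (show (0:ℝ) ≤ c*p^2*r*(u*uR) by positivity) (by linarith)]
  -- Q is positive at u and at uR
  have hQpos : ∀ t : ℝ, t = u ∨ t = uR →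
      0 < t^2 + (u + uR - (1 + a))*t + (a + (u + uR)*(u + uR - (1 + a)) - u*uR) := by
    intro t ht
    by_contra hneg; push_neg at hneg
    have ht0 : 0 < t := by rcases ht with rfl | rfl; exacts [hu, huR]
    have ht1 : t < 1 := by rcases ht with rfl | rfl; exacts [hu1, huR1]
    have htp : p*t < 1 := by rcases ht with rfl | rfl; exacts [hpu, hpuR]
    have hdisc : 0 ≤ (u + uR - (1 + a))^2 - 4*(a + (u + uR)*(u + uR - (1 + a)) - u*uR) := by
      nlinarith only [hneg, sq_nonneg (2*t + (u + uR - (1 + a)))]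
    obtain ⟨w1, w2, hw12, hsum, hprod⟩ : ∃ w1 w2 : ℝ, w1 ≤ w2 ∧
        w1 + w2 = -(u + uR - (1 + a)) ∧
        w1 * w2 = a + (u + uR)*(u + uR - (1 + a)) - u*uR := by
      refine ⟨(-(u + uR - (1 + a)) - Real.sqrt ((u + uR - (1 + a))^2
          - 4*(a + (u + uR)*(u + uR - (1 + a)) - u*uR)))/2,
        (-(u + uR - (1 + a)) + Real.sqrt ((u + uR - (1 + a))^2
          - 4*(a + (u + uR)*(u + uR - (1 + a)) - u*uR)))/2, ?_, by ring, ?_⟩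
      · have := Real.sqrt_nonneg ((u + uR - (1 + a))^2
          - 4*(a + (u + uR)*(u + uR - (1 + a)) - u*uR))
        linarith
      · have h := Real.sq_sqrt hdisc
        linear_combination (-1/4 : ℝ) * h
    have hfac_t : (t - w1)*(t - w2) ≤ 0 := by
      have hft : (t - w1)*(t - w2)
          = t^2 + (u + uR - (1 + a))*t + (a + (u + uR)*(u + uR - (1 + a)) - u*uR) := by
        linear_combination (-t)*hsum + hprod
      rw [hft]; exact hneg
    have hw1t : w1 ≤ t := by
      by_contra h; push_neg at h
      nlinarith only [hfac_t, mul_pos (show (0:ℝ) < w1 - t by linarith only [h, hw12]) (show (0:ℝ) < w2 - t by linarith only [h, hw12])]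
    have htw2 : t ≤ w2 := by
      by_contra h; push_neg at h
      nlinarith only [hfac_t, mul_pos (show (0:ℝ) < t - w1 by linarith only [h, hw12]) (show (0:ℝ) < t - w2 by linarith only [h])]
    have hw1pos : 0 < w1 := by
      by_contra h; push_neg at h
      nlinarith only [hprod, hDq0, mul_nonpos_of_nonpos_of_nonneg h (le_trans (le_of_lt ht0) htw2)]
    have hw2pos : 0 < w2 := lt_of_lt_of_le ht0 htw2
    -- w2 < 1/p via sign of H at 1/p
    have hpX : p * (1/p) = 1 := by field_simp
    have hX1 : 1 < 1/p := by rw [lt_div_iff₀ hp0]; linarith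
    have h5 : c*p^2*r*((1/p)-u)*((1/p)-uR)*((1/p)^2 + (u + uR - (1 + a))*(1/p)
        + (a + (u + uR)*(u + uR - (1 + a)) - u*uR))
        = -(c*p^2*r*(1/p)^2*(1-(1/p))*((1/p)-a)) := by
      linear_combination master (1/p) + (1/p)*hal + hbe - hpX
    have hposfac : 0 < c*p^2*r*((1/p)-u)*((1/p)-uR) := by
      have h6 : 0 < (1/p) - u := by linarith
      have h7 : 0 < (1/p) - uR := by linarith
      have h8 : 0 < c*p^2*r := by positivity
      exact mul_pos (mul_pos h8 h6) h7
    have hQX : 0 < (1/p)^2 + (u + uR - (1 + a))*(1/p)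
        + (a + (u + uR)*(u + uR - (1 + a)) - u*uR) := by
      have hA : 0 < c*p^2*r*(1/p)^2*((1/p)-1)*((1/p)-a) := by
        have h8 : 0 < c*p^2*r*(1/p)^2 := by positivity
        exact mul_pos (mul_pos h8 (by linarith)) (by linarith)
      by_contra h; push_neg at h
      nlinarith only [h5, hA, mul_nonneg (le_of_lt hposfac) (neg_nonneg.mpr h)]
    have hw2X : w2 < 1/p := by
      by_contra h; push_neg at h
      have hfx : ((1/p) - w1)*((1/p) - w2)
          = (1/p)^2 + (u + uR - (1 + a))*(1/p)
            + (a + (u + uR)*(u + uR - (1 + a)) - u*uR) := by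
        linear_combination (-(1/p))*hsum + hprod
      nlinarith only [hQX, hfx, mul_nonpos_of_nonneg_of_nonpos
        (by linarith only [hw1t, ht1, hX1] : (0:ℝ) ≤ (1/p) - w1) (by linarith only [h] : (1/p) - w2 ≤ 0)]
    -- each wi is a root of the quartic, hence an equilibrium abscissa
    have hroot : ∀ w : ℝ, 0 < w → p*w < 1 →
        w^2 + (u + uR - (1 + a))*w + (a + (u + uR)*(u + uR - (1 + a)) - u*uR) = 0 →
        w = u ∨ w = uR := by
      intro w hw0 hwp hQw
      have hHw : c*p^2*r*w^2*(1-w)*(w-a) + p*w - 1 = 0 := by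
        linear_combination master w + w*hal + hbe - (c*p^2*r*(w-u)*(w-uR))*hQw
      have hwne : w ≠ 0 := ne_of_gt hw0
      have hcne : c ≠ 0 := ne_of_gt hc
      have hpne : p ≠ 0 := ne_of_gt hp0
      have hv1 : 0 < (1 - p*w)/(c*p*w) := by
        apply div_pos (by linarith) (by positivity)
      have he2w : p*w*(1 + c*((1 - p*w)/(c*p*w))) = 1 := by
        field_simp
        ring
      have he1w : r*(1-w)*(w-a) = (1 + c*((1 - p*w)/(c*p*w)))*((1 - p*w)/(c*p*w)) := by
        field_simp
        linear_combination hHw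
      rcases honly w ((1 - p*w)/(c*p*w)) hw0 hv1 he1w he2w with h | h
      · left; exact (Prod.ext_iff.mp h).1
      · right; exact (Prod.ext_iff.mp h).1
    have hQw1 : w1^2 + (u + uR - (1 + a))*w1 + (a + (u + uR)*(u + uR - (1 + a)) - u*uR) = 0 := by
      linear_combination w1*hsum - hprod
    have hQw2 : w2^2 + (u + uR - (1 + a))*w2 + (a + (u + uR)*(u + uR - (1 + a)) - u*uR) = 0 := by
      linear_combination w2*hsum - hprod
    have hpw1 : p*w1 < 1 := by nlinarith only [htp, mul_le_mul_of_nonneg_left hw1t (le_of_lt hp0)]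
    have hpw2 : p*w2 < 1 := by
      have h9 : p*w2 < p*(1/p) := mul_lt_mul_of_pos_left hw2X hp0
      linarith only [h9, hpX]
    have hw1u := hroot w1 hw1pos hpw1 hQw1
    have hw2u := hroot w2 hw2pos hpw2 hQw2
    rcases hw1u with h1e | h1e
    · rcases hw2u with h2e | h2e
      · -- w1 = w2 = u : triple root case
        rw [h1e, h2e] at hsum hprod
        have hBv : u + uR - (1 + a) = -(2*u) := by linarith only [hsum]
        have hDv : a + (u + uR)*(u + uR - (1 + a)) - u*uR = u^2 := by
          linarith only [hprod]
        have hk : p*(u*uR) = u + 3*uR := by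
          linear_combination (u*uR)*hal + (u + 3*uR)*hbe
            + (-(c*p^2*r)*(u*uR)^2)*hBv + (-2*(c*p^2*r)*(u*uR)*uR)*hDv
        have h10 : p*(u*uR) < uR := by
          have := mul_lt_mul_of_pos_right hpu huR
          nlinarith only [this]
        linarith only [hk, h10, hu, huR]
      · -- w1 = u, w2 = uR : double-double case
        rw [h1e, h2e] at hsum hprod
        have h1 : 2*(u+uR) = 1+a := by linarith only [hsum]
        nlinarith only [hprod, mul_pos hu huR, sq_nonneg (1-a), h1]
    · rcases hw2u with h2e | h2e
      · rw [h1e, h2e] at hw12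
        linarith only [hw12, hlt]
      · -- w1 = w2 = uR
        rw [h1e, h2e] at hsum hprod
        have hBv : u + uR - (1 + a) = -(2*uR) := by linarith only [hsum]
        have hDv : a + (u + uR)*(u + uR - (1 + a)) - u*uR = uR^2 := by
          linarith only [hprod]
        have hk : p*(u*uR) = uR + 3*u := by
          linear_combination (u*uR)*hal + (uR + 3*u)*hbe
            + (-(c*p^2*r)*(u*uR)^2)*hBv + (-2*(c*p^2*r)*(u*uR)*u)*hDv
        have h10 : p*(u*uR) < u := by
          have := mul_lt_mul_of_pos_right hpuR hu
          nlinarith only [this]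
        linarith only [hk, h10, hu, huR]
  have hQu := hQpos u (Or.inl rfl)
  have hQuR := hQpos uR (Or.inr rfl)
  have hBu : p^2*u^2*(r*c*u*(1+a-2*u) + (1+c*v)*(1+2*c*v))
      = c*p^2*r*u*(uR-u)*(u^2 + (u + uR - (1 + a))*u
          + (a + (u + uR)*(u + uR - (1 + a)) - u*uR)) := by
    linear_combination (-2 : ℝ)*Hu + u*hal + (p*u*(1+2*c*v)+1)*he2 + hcv
  have hBuR : p^2*uR^2*(r*c*uR*(1+a-2*uR) + (1+c*vR)*(1+2*c*vR))
      = c*p^2*r*uR*(u-uR)*(uR^2 + (u + uR - (1 + a))*uR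
          + (a + (u + uR)*(u + uR - (1 + a)) - u*uR)) := by
    linear_combination (-2 : ℝ)*HuR + uR*hal + (p*uR*(1+2*c*vR)+1)*heR2 + hcvR
  have hBpos : 0 < r*c*u*(1+a-2*u) + (1+c*v)*(1+2*c*v) := by
    have hrhs : 0 < c*p^2*r*u*(uR-u)*(u^2 + (u + uR - (1 + a))*u
        + (a + (u + uR)*(u + uR - (1 + a)) - u*uR)) := by
      exact mul_pos (mul_pos (show 0 < c*p^2*r*u by positivity) (by linarith)) hQu
    by_contra h; push_neg at h
    nlinarith only [hBu, hrhs, mul_nonpos_of_nonneg_of_nonpos (show (0:ℝ) ≤ p^2*u^2 by positivity) h]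
  have hBneg : r*c*uR*(1+a-2*uR) + (1+c*vR)*(1+2*c*vR) < 0 := by
    have hrhs : c*p^2*r*uR*(u-uR)*(uR^2 + (u + uR - (1 + a))*uR
        + (a + (u + uR)*(u + uR - (1 + a)) - u*uR)) < 0 := by
      exact mul_neg_of_neg_of_pos
        (mul_neg_of_pos_of_neg (show 0 < c*p^2*r*uR by positivity) (by linarith)) hQuR
    by_contra h; push_neg at h
    nlinarith only [hBuR, hrhs, mul_nonneg (show (0:ℝ) ≤ p^2*uR^2 by positivity) h]
  have hdet1 : 0 < m * p * u * v * (r * c * u * (1 + a - 2 * u) + (1 + c * v) * (1 + 2 * c * v)) := by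
    exact mul_pos (mul_pos (mul_pos (mul_pos hm hp0) hu) hv) hBpos
  have hdet2 : m * p * uR * vR * (r * c * uR * (1 + a - 2 * uR) + (1 + c * vR) * (1 + 2 * c * vR)) < 0 := by
    exact mul_neg_of_pos_of_neg (mul_pos (mul_pos (mul_pos hm hp0) huR) hvR) hBneg
  refine ⟨hdet1, hdet2, ?_⟩
  set T := r * uR * (1 + a - 2 * uR) + m * p * c * uR * vR with hT
  set DT := m * p * uR * vR * (r * c * uR * (1 + a - 2 * uR) + (1 + c * vR) * (1 + 2 * c * vR)) with hDT
  have hΔ : 0 ≤ T^2 - 4*DT := by nlinarith only [sq_nonneg T, hdet2]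
  have he2' : (Real.sqrt (T^2 - 4*DT))^2 = T^2 - 4*DT := Real.sq_sqrt hΔ
  have he0 : 0 ≤ Real.sqrt (T^2 - 4*DT) := Real.sqrt_nonneg _
  have hT2 : T^2 < (Real.sqrt (T^2 - 4*DT))^2 := by rw [he2']; nlinarith only [hdet2]
  have hTlt : T < Real.sqrt (T^2 - 4*DT) := by
    by_contra h; push_neg at h
    nlinarith only [hT2, mul_nonneg (sub_nonneg.mpr h) (by linarith only [h, he0] : (0:ℝ) ≤ T + Real.sqrt (T^2 - 4*DT))]
  have hTlt' : -T < Real.sqrt (T^2 - 4*DT) := by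
    by_contra h; push_neg at h
    nlinarith only [hT2, mul_nonneg (by linarith only [h] : (0:ℝ) ≤ -T - Real.sqrt (T^2 - 4*DT))
      (by linarith only [h, he0] : (0:ℝ) ≤ -T + Real.sqrt (T^2 - 4*DT))]
  refine ⟨(T - Real.sqrt (T^2 - 4*DT))/2, (T + Real.sqrt (T^2 - 4*DT))/2,
    by linarith, by linarith, ?_, ?_⟩
  · linear_combination (1/4 : ℝ) * he2'
  · linear_combination (1/4 : ℝ) * he2'
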